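/- Let d ∈ ℕ, let 0 < p₁, p₂, p < ∞ satisfy 1/p₁ + 1/p₂ = 1 + 1/p, and let 0 < σ₁, σ₂ < ∞ satisfy (1/p₁)(1 − 1/p₁)σ₂ = (1/p₂)(1 − 1/p₂)σ₁. Then with H_s(x) := s^{−d/2} e^{−π|x|²/s} for s > 0, one has ‖H_{σ₁}^{1/p₁} * H_{σ₂}^{1/p₂}‖_{L^p(ℝ^d)} = (C_{p₁} C_{p₂} / C_p)^d, where C_r := (r^{1/r} / r′^{1/r′})^{1/2} and r′ is the conjugate exponent, 1/r + 1/r′ = 1. -/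

import Mathlib

open MeasureTheory Real Set
open scoped ENNReal NNReal RealInnerProductSpace

noncomputable section

/-- Euclidean space `ℝ^d`. -/
abbrev Euc (d : ℕ) := EuclideanSpace ℝ (Fin d)

/-- The spatial Laplacian of `f : ℝ^d → ℝ`. -/
def lap {d : ℕ} (f : Euc d → ℝ) (x : Euc d) : ℝ :=
  ∑ i : Fin d,
    fderiv ℝ (fun y => fderiv ℝ f y (EuclideanSpace.single i 1)) x (EuclideanSpace.single i 1)

/-- The divergence of a vector field on `ℝ^d`. -/
def div' {d : ℕ} (F : Euc d → Euc d) (x : Euc d) : ℝ :=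
  ∑ i : Fin d, fderiv ℝ (fun y => F y i) x (EuclideanSpace.single i 1)

/-- Convolution of two scalar functions on `ℝ^d`. -/
def conv {d : ℕ} (f g : Euc d → ℝ) (x : Euc d) : ℝ := ∫ y, f (x - y) * g y

/-- Convolution, vector-valued on the left. -/
def convVS {d : ℕ} (F : Euc d → Euc d) (g : Euc d → ℝ) (x : Euc d) : Euc d :=
  ∫ y, g y • F (x - y)

/-- Convolution, vector-valued on the right. -/
def convSV {d : ℕ} (f : Euc d → ℝ) (G : Euc d → Euc d) (x : Euc d) : Euc d :=
  ∫ y, f (x - y) • G y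

/-- Convolution of two vector fields using the inner product. -/
def convVV {d : ℕ} (F G : Euc d → Euc d) (x : Euc d) : ℝ :=
  ∫ y, inner ℝ (F (x - y)) (G y)

/-- `v` is rapidly decreasing in space, locally uniformly in time `t > 0`. -/
def RD {d : ℕ} (v : ℝ → Euc d → ℝ) : Prop :=
  ∀ K : Set ℝ, IsCompact K → K ⊆ Ioi (0 : ℝ) → ∀ N : ℕ, ∃ C : ℝ,
    ∀ t ∈ K, ∀ x : Euc d, (1 + ‖x‖) ^ N * |v t x| ≤ C

/-- Vector-valued version of `RD`. -/
def RDvec {d : ℕ} (v : ℝ → Euc d → Euc d) : Prop :=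
  ∀ K : Set ℝ, IsCompact K → K ⊆ Ioi (0 : ℝ) → ∀ N : ℕ, ∃ C : ℝ,
    ∀ t ∈ K, ∀ x : Euc d, (1 + ‖x‖) ^ N * ‖v t x‖ ≤ C

/-- The `L^q` (quasi-)norm, `0 < q < ∞`. -/
def Lnorm {d : ℕ} (q : ℝ) (f : Euc d → ℝ) : ℝ := (∫ x, |f x| ^ q) ^ (1 / q)

/-- The heat kernel `H_s(x) = s^{-d/2} e^{-π|x|²/s}`. -/
def heatK (d : ℕ) (s : ℝ) (x : Euc d) : ℝ :=
  s ^ (-(d : ℝ) / 2) * Real.exp (-π * ‖x‖ ^ 2 / s)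

/-- The constant `C_r = (r^{1/r}/|r'|^{1/r'})^{1/2}`, where `1/r + 1/r' = 1` (and `C_1 = 1`). -/
def Cc (r : ℝ) : ℝ :=
  if r = 1 then 1
  else (r ^ (1 / r) / |r / (r - 1)| ^ (1 / (r / (r - 1)))) ^ ((1 : ℝ) / 2)

/-- The five regularity (rapid decay) conditions on `u^a` from the paper. -/
def GoodReg {d : ℕ} (a : ℝ) (u : ℝ → Euc d → ℝ) : Prop :=
  RD (fun t x => u t x ^ a) ∧
  RD (fun t x => deriv (fun s => u s x ^ a) t) ∧
  RDvec (fun t x => gradient (fun y => u t y ^ a) x) ∧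
  RD (fun t x => u t x ^ a * ‖gradient (fun y => Real.log (u t y)) x‖ ^ 2) ∧
  RD (fun t x => lap (fun y => u t y ^ a) x)

/-- Iterated convolution of a list of functions. -/
def convList {d : ℕ} : List (Euc d → ℝ) → Euc d → ℝ
  | [] => fun _ => 0
  | [f] => f
  | f :: g :: fs => conv f (convList (g :: fs))



-- ==================== auxiliary lemmas ====================

lemma gauss_integral {d : ℕ} {c : ℝ} (hc : 0 < c) :
    ∫ x : Euc d, rexp (-(π * c) * ‖x‖ ^ 2) = c ^ (-(d : ℝ) / 2) := by
  rw [GaussianFourier.integral_rexp_neg_mul_sq_norm (by positivity : (0:ℝ) < π * c)]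
  rw [finrank_euclideanSpace_fin]
  rw [show π / (π * c) = c⁻¹ by field_simp]
  rw [← Real.rpow_neg_one c, ← Real.rpow_mul hc.le]
  ring_nf

lemma conv_gauss {d : ℕ} {c₁ c₂ : ℝ} (h1 : 0 < c₁) (h2 : 0 < c₂) (x : Euc d) :
    conv (fun y => rexp (-(π * c₁) * ‖y‖ ^ 2)) (fun y => rexp (-(π * c₂) * ‖y‖ ^ 2)) x
      = (c₁ + c₂) ^ (-(d : ℝ) / 2) * rexp (-(π * (c₁ * c₂ / (c₁ + c₂))) * ‖x‖ ^ 2) := by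
  have hs : (0:ℝ) < c₁ + c₂ := by linarith
  unfold conv
  have key : ∀ y : Euc d,
      rexp (-(π * c₁) * ‖x - y‖ ^ 2) * rexp (-(π * c₂) * ‖y‖ ^ 2)
        = rexp (-(π * (c₁ + c₂)) * ‖y - (c₁ / (c₁ + c₂)) • x‖ ^ 2)
          * rexp (-(π * (c₁ * c₂ / (c₁ + c₂))) * ‖x‖ ^ 2) := by
    intro y
    rw [← Real.exp_add, ← Real.exp_add]
    congr 1
    have e1 : ‖x - y‖ ^ 2 = ‖x‖ ^ 2 - 2 * ⟪x, y⟫ + ‖y‖ ^ 2 := norm_sub_sq_real x y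
    have e2 : ‖y - (c₁ / (c₁ + c₂)) • x‖ ^ 2
        = ‖y‖ ^ 2 - 2 * ((c₁ / (c₁ + c₂)) * ⟪x, y⟫) + (c₁ / (c₁ + c₂)) ^ 2 * ‖x‖ ^ 2 := by
      rw [norm_sub_sq_real, real_inner_smul_right, real_inner_comm, norm_smul]
      rw [Real.norm_eq_abs, mul_pow, sq_abs]
    rw [e1, e2]
    field_simp
    ring
  simp_rw [key]
  rw [MeasureTheory.integral_mul_const]
  rw [MeasureTheory.integral_sub_right_eq_self
    (fun y : Euc d => rexp (-(π * (c₁ + c₂)) * ‖y‖ ^ 2)) ((c₁ / (c₁ + c₂)) • x)]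
  rw [gauss_integral hs]

lemma lnorm_gauss {d : ℕ} {C k p : ℝ} (hC : 0 < C) (hk : 0 < k) (hp : 0 < p) :
    Lnorm (d := d) p (fun x => C * rexp (-(π * k) * ‖x‖ ^ 2))
      = C * (k * p) ^ (-(d : ℝ) / (2 * p)) := by
  unfold Lnorm
  have key : ∀ x : Euc d, |C * rexp (-(π * k) * ‖x‖ ^ 2)| ^ p
      = C ^ p * rexp (-(π * (k * p)) * ‖x‖ ^ 2) := by
    intro x
    rw [abs_of_pos (by positivity)]
    rw [Real.mul_rpow hC.le (Real.exp_nonneg _), ← Real.exp_mul]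
    ring_nf
  simp_rw [key]
  rw [MeasureTheory.integral_const_mul, gauss_integral (by positivity)]
  rw [Real.mul_rpow (by positivity) (by positivity)]
  rw [← Real.rpow_mul hC.le, mul_one_div_cancel hp.ne', Real.rpow_one,
    ← Real.rpow_mul (by positivity)]
  congr 1
  field_simp

lemma Cc_pos {r : ℝ} (hr : 0 < r) : 0 < Cc r := by
  unfold Cc
  split
  · norm_num
  · next h =>
    have h0 : r / (r - 1) ≠ 0 := div_ne_zero hr.ne' (sub_ne_zero.mpr h)
    exact Real.rpow_pos_of_pos (div_pos (Real.rpow_pos_of_pos hr _)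
      (Real.rpow_pos_of_pos (abs_pos.mpr h0) _)) _

lemma Cc_sq {r : ℝ} (hr : 0 < r) (hr1 : r ≠ 1) :
    Cc r ^ 2 = (1/r) ^ (-(1/r)) * |1 - 1/r| ^ (1 - 1/r) := by
  have hne : r - 1 ≠ 0 := sub_ne_zero.mpr hr1
  have h1 : 1 / (r / (r - 1)) = 1 - 1/r := by field_simp
  have h2 : |r / (r - 1)| = |1 - 1/r|⁻¹ := by
    rw [show (1 - 1/r) = (r-1)/r by field_simp, abs_div, abs_div, abs_of_pos hr]
    rw [inv_div]
  have h3 : (1/r) ^ (-(1/r)) = r ^ (1/r) := by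
    rw [one_div, Real.inv_rpow hr.le, ← Real.rpow_neg hr.le, neg_neg]
  have habs : (0:ℝ) < |1 - 1/r| := by
    rw [abs_pos]
    intro h
    apply hr1
    field_simp at h
    linarith
  unfold Cc
  rw [if_neg hr1, h1, h2, h3]
  rw [Real.inv_rpow habs.le, div_eq_mul_inv, inv_inv]
  rw [← Real.rpow_natCast (_ ^ ((1:ℝ)/2)) 2, ← Real.rpow_mul (by positivity)]
  norm_num

lemma core (α β lam u v : ℝ) (hα : 0 < α) (hβ : 0 < β) (hl : 0 < lam)
    (hu : 0 < u) (hv : 0 < v) (hγ : 0 < α + β - 1) :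
    (lam*α*u) ^ (-α) * ((lam*β*v) ^ (-β)) *
      (α/(lam*α*u) + β/(lam*β*v))⁻¹ *
      (α/(lam*α*u) * (β/(lam*β*v)) / (α/(lam*α*u) + β/(lam*β*v)) * (1/(α+β-1))) ^ (-(α+β-1))
    = α^(-α) * u^(1-α) * (β^(-β) * v^(1-β))
      / ((α+β-1)^(-(α+β-1)) * (u+v)^(1-(α+β-1))) := by
  set γ : ℝ := α + β - 1 with hγdef
  have huv : (0:ℝ) < u + v := by linarith
  have e1 : α/(lam*α*u) = 1/(lam*u) := by field_simp
  have e2 : β/(lam*β*v) = 1/(lam*v) := by field_simp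
  rw [e1, e2]
  have e3 : 1/(lam*u) + 1/(lam*v) = (u+v)/(lam*(u*v)) := by field_simp; ring
  rw [e3]
  have e4 : 1/(lam*u) * (1/(lam*v)) / ((u+v)/(lam*(u*v))) * (1/γ)
      = 1/(γ*(lam*(u+v))) := by field_simp
  rw [e4]
  rw [show ((u+v)/(lam*(u*v)))⁻¹ = (lam*(u*v))/(u+v) from by rw [inv_div]]
  have P : ∀ x : ℝ, 0 < x → ∀ e : ℝ, x ^ e = rexp (e * Real.log x) := by
    intro x hx e; rw [Real.rpow_def_of_pos hx, mul_comm]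
  rw [P _ (by positivity) (-α), P _ (by positivity) (-β),
      P _ (by positivity) (-γ), P _ hα (-α), P _ hu (1-α), P _ hβ (-β), P _ hv (1-β),
      P _ hγ (-γ), P _ huv (1-γ)]
  rw [show lam*(u*v)/(u+v) = rexp (Real.log (lam*(u*v)/(u+v))) from
    (Real.exp_log (by positivity)).symm]
  simp only [← Real.exp_add, ← Real.exp_sub]
  congr 1
  rw [Real.log_mul (by positivity) hu.ne', Real.log_mul hl.ne' hα.ne',
      Real.log_mul (by positivity) hv.ne', Real.log_mul hl.ne' hβ.ne',
      Real.log_div (by positivity) huv.ne', Real.log_mul hl.ne' (by positivity),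
      Real.log_mul hu.ne' hv.ne',
      show (1:ℝ)/(γ*(lam*(u+v))) = (γ*(lam*(u+v)))⁻¹ from one_div _,
      Real.log_inv,
      Real.log_mul hγ.ne' (by positivity), Real.log_mul hl.ne' huv.ne']
  ring

lemma main_alg (p₁ p₂ p σ₁ σ₂ lam u v : ℝ) (hp₁ : 0 < p₁) (hp₂ : 0 < p₂) (hp : 0 < p)
    (h1 : p₁ ≠ 1) (h3 : p ≠ 1)
    (hl : 0 < lam) (hu : 0 < u) (hv : 0 < v)
    (h2 : p₂ ≠ 1)
    (hγ : 1/p = 1/p₁ + 1/p₂ - 1)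
    (ha1 : |1 - 1/p₁| = u) (ha2 : |1 - 1/p₂| = v) (ha3 : |1 - 1/p| = u + v)
    (hs1 : σ₁ = lam * (1/p₁) * u) (hs2 : σ₂ = lam * (1/p₂) * v) :
    σ₁ ^ (-(1/p₁)) * σ₂ ^ (-(1/p₂)) * ((1/p₁)/σ₁ + (1/p₂)/σ₂)⁻¹ *
      ((1/p₁)/σ₁ * ((1/p₂)/σ₂) / ((1/p₁)/σ₁ + (1/p₂)/σ₂) * p) ^ (-(1/p))
    = (Cc p₁ * Cc p₂ / Cc p) ^ 2 := by
  have hα : 0 < 1/p₁ := by positivity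
  have hβ : 0 < 1/p₂ := by positivity
  have hγpos : 0 < 1/p₁ + 1/p₂ - 1 := hγ ▸ by positivity
  have hpval : p = 1/(1/p₁ + 1/p₂ - 1) := by
    rw [← hγ]; field_simp
  rw [div_pow, mul_pow, Cc_sq hp₁ h1, Cc_sq hp₂ h2, Cc_sq hp h3, ha1, ha2, ha3,
    hγ, hs1, hs2, hpval]
  exact core (1/p₁) (1/p₂) lam u v hα hβ hl hu hv hγpos

/-- With `1/p₁ + 1/p₂ = 1 + 1/p` and `σ₁, σ₂ > 0` satisfying
`(1/p₁)(1-1/p₁)σ₂ = (1/p₂)(1-1/p₂)σ₁`, the heat kernels `H_s(x) = s^{-d/2} e^{-π|x|²/s}`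
satisfy `‖H_{σ₁}^{1/p₁} * H_{σ₂}^{1/p₂}‖_{L^p(ℝ^d)} = (C_{p₁} C_{p₂} / C_p)^d`. -/
theorem statement14 (d : ℕ) (hd : 0 < d) (p₁ p₂ p σ₁ σ₂ : ℝ)
    (hp₁ : 0 < p₁) (hp₂ : 0 < p₂) (hp : 0 < p)
    (hscal : 1 / p₁ + 1 / p₂ = 1 + 1 / p)
    (hσ₁ : 0 < σ₁) (hσ₂ : 0 < σ₂)
    (hBL : 1 / p₁ * (1 - 1 / p₁) * σ₂ = 1 / p₂ * (1 - 1 / p₂) * σ₁) :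
    Lnorm p (conv (fun x => heatK d σ₁ x ^ (1 / p₁)) (fun x => heatK d σ₂ x ^ (1 / p₂)))
      = (Cc p₁ * Cc p₂ / Cc p) ^ d := by
  have hπ := Real.pi_pos
  have hα : 0 < 1/p₁ := by positivity
  have hβ : 0 < 1/p₂ := by positivity
  have hγ : 0 < 1/p := by positivity
  have hc1 : 0 < (1/p₁)/σ₁ := by positivity
  have hc2 : 0 < (1/p₂)/σ₂ := by positivity
  have hcs : 0 < (1/p₁)/σ₁ + (1/p₂)/σ₂ := by linarith
  have hk : 0 < (1/p₁)/σ₁ * ((1/p₂)/σ₂) / ((1/p₁)/σ₁ + (1/p₂)/σ₂) := by positivity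
  have f1 : ∀ (σ q : ℝ), 0 < σ → 0 < q → (fun x : Euc d => heatK d σ x ^ (1/q))
      = fun x : Euc d => σ ^ (-(d:ℝ)/2 * (1/q)) * rexp (-(π * ((1/q)/σ)) * ‖x‖^2) := by
    intro σ q hσ hq
    funext x
    unfold heatK
    rw [Real.mul_rpow (by positivity) (Real.exp_nonneg _), ← Real.rpow_mul hσ.le,
      ← Real.exp_mul]
    rw [show -π * ‖x‖^2 / σ * (1/q) = -(π * ((1/q)/σ)) * ‖x‖^2 by
      field_simp]
  have f2 : conv (fun x => heatK d σ₁ x ^ (1/p₁)) (fun x => heatK d σ₂ x ^ (1/p₂))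
      = fun x : Euc d => (σ₁ ^ (-(d:ℝ)/2 * (1/p₁)) * σ₂ ^ (-(d:ℝ)/2 * (1/p₂)) *
          ((1/p₁)/σ₁ + (1/p₂)/σ₂) ^ (-(d:ℝ)/2)) *
          rexp (-(π * ((1/p₁)/σ₁ * ((1/p₂)/σ₂) / ((1/p₁)/σ₁ + (1/p₂)/σ₂))) * ‖x‖^2) := by
    rw [f1 σ₁ p₁ hσ₁ hp₁, f1 σ₂ p₂ hσ₂ hp₂]
    funext x
    unfold conv
    have step : ∀ y : Euc d,
        (σ₁ ^ (-(d:ℝ)/2 * (1/p₁)) * rexp (-(π * ((1/p₁)/σ₁)) * ‖x - y‖^2)) *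
          (σ₂ ^ (-(d:ℝ)/2 * (1/p₂)) * rexp (-(π * ((1/p₂)/σ₂)) * ‖y‖^2))
        = (σ₁ ^ (-(d:ℝ)/2 * (1/p₁)) * σ₂ ^ (-(d:ℝ)/2 * (1/p₂))) *
            (rexp (-(π * ((1/p₁)/σ₁)) * ‖x - y‖^2) * rexp (-(π * ((1/p₂)/σ₂)) * ‖y‖^2)) :=
      fun y => by ring
    simp_rw [step]
    rw [MeasureTheory.integral_const_mul]
    have hcg := conv_gauss (d := d) hc1 hc2 x
    unfold conv at hcg
    rw [hcg]
    ring
  rw [f2, lnorm_gauss (by positivity) hk hp]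
  have key : σ₁ ^ (-(1/p₁)) * σ₂ ^ (-(1/p₂)) * ((1/p₁)/σ₁ + (1/p₂)/σ₂)⁻¹ *
      ((1/p₁)/σ₁ * ((1/p₂)/σ₂) / ((1/p₁)/σ₁ + (1/p₂)/σ₂) * p) ^ (-(1/p))
      = (Cc p₁ * Cc p₂ / Cc p) ^ 2 := by
    by_cases hall : p₁ = 1 ∨ p₂ = 1 ∨ p = 1
    · -- degenerate case : all exponents are 1
      have h111 : p₁ = 1 ∧ p₂ = 1 ∧ p = 1 := by
        have lem12 : p₁ = 1 → p₂ = 1 := by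
          intro h
          rw [h] at hBL
          norm_num at hBL
          rcases hBL with h' | h'
          · rcases h' with h'' | h''
            · exact absurd h'' (by positivity)
            · have hinv : p₂⁻¹ = 1 := by linarith
              exact inv_eq_one.mp hinv
          · exact absurd h' hσ₁.ne'
        have lem123 : p₁ = 1 → p₁ = 1 ∧ p₂ = 1 ∧ p = 1 := by
          intro h
          have h2 := lem12 h
          refine ⟨h, h2, ?_⟩
          rw [h, h2] at hscal
          norm_num at hscal
          have hinv : p⁻¹ = 1 := by linarith
          exact inv_eq_one.mp hinv
        rcases hall with h | h | h
        · exact lem123 h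
        · -- symmetric : p₂ = 1 → p₁ = 1
          apply lem123
          rw [h] at hBL
          norm_num at hBL
          rcases hBL with h' | h'
          · rcases h' with h'' | h''
            · exact absurd h'' (by positivity)
            · have hinv : p₁⁻¹ = 1 := by linarith
              exact inv_eq_one.mp hinv
          · exact absurd h' hσ₂.ne'
        · -- p = 1 forces p₁ = 1
          apply lem123
          have hple : 1/p = 1 := by rw [h]; norm_num
          have hsum : 1/p₁ + 1/p₂ = 2 := by rw [hple] at hscal; linarith
          have key2 : (1 - 1/p₁) * ((1/p₁) * σ₂ + (1/p₂) * σ₁) = 0 := by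
            linear_combination hBL - (1/p₂ * σ₁) * hsum
          have hpos2 : 0 < (1/p₁) * σ₂ + (1/p₂) * σ₁ := by positivity
          have : 1 - 1/p₁ = 0 := by
            rcases mul_eq_zero.mp key2 with h' | h'
            · exact h'
            · exact absurd h' hpos2.ne'
          have hinv : p₁⁻¹ = 1 := by
            rw [← one_div]
            linarith
          exact inv_eq_one.mp hinv
      obtain ⟨e1, e2, e3⟩ := h111
      subst e1; subst e2; subst e3
      have hCc1 : Cc 1 = 1 := by unfold Cc; simp
      rw [hCc1]
      norm_num
      rw [Real.rpow_neg_one, Real.rpow_neg_one, Real.rpow_neg_one]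
      have hss : σ₁⁻¹ + σ₂⁻¹ ≠ 0 := by positivity
      field_simp
    · push_neg at hall
      obtain ⟨h1, h2, h3⟩ := hall
      have hscal' : 1/p = 1/p₁ + 1/p₂ - 1 := by linarith
      have hne1 : 1/p₁ ≠ 1 := by
        intro h
        apply h1
        field_simp at h
        linarith
      rcases lt_trichotomy (1/p₁) 1 with hlt | heq | hgt
      · -- subcase 1/p₁ < 1, hence 1/p₂ < 1
        have hprod : 0 < 1/p₂ * (1 - 1/p₂) * σ₁ :=
          hBL ▸ mul_pos (mul_pos hα (by linarith)) hσ₂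
        have hlt2 : 1/p₂ < 1 := by
          by_contra hcon
          push_neg at hcon
          nlinarith [hprod, mul_pos hβ hσ₁]
        have hu : 0 < 1 - 1/p₁ := by linarith
        have hv : 0 < 1 - 1/p₂ := by linarith
        have hl : 0 < σ₁ / ((1/p₁) * (1 - 1/p₁)) := by positivity
        apply main_alg p₁ p₂ p σ₁ σ₂ (σ₁ / ((1/p₁) * (1 - 1/p₁))) (1 - 1/p₁) (1 - 1/p₂)
          hp₁ hp₂ hp h1 h3 hl hu hv h2 hscal'
        · exact abs_of_pos hu
        · exact abs_of_pos hv
        · rw [hscal']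
          rw [abs_of_pos (by linarith)]
          ring
        · have hx : (1/p₁)*(1 - 1/p₁) ≠ 0 := ne_of_gt (mul_pos hα hu)
          rw [div_mul_eq_mul_div, div_mul_eq_mul_div, eq_div_iff hx]
          ring
        · have hx : (1/p₁)*(1 - 1/p₁) ≠ 0 := ne_of_gt (mul_pos hα hu)
          rw [div_mul_eq_mul_div, div_mul_eq_mul_div, eq_div_iff hx]
          linear_combination hBL
      · exact absurd heq hne1
      · -- subcase 1/p₁ > 1, hence 1/p₂ > 1
        have hprod : 1/p₂ * (1 - 1/p₂) * σ₁ < 0 := by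
          rw [← hBL]
          have : 1/p₁ * (1 - 1/p₁) < 0 :=
            mul_neg_of_pos_of_neg hα (by linarith)
          exact mul_neg_of_neg_of_pos this hσ₂
        have hgt2 : 1 < 1/p₂ := by
          by_contra hcon
          push_neg at hcon
          nlinarith [hprod, mul_pos hβ hσ₁]
        have hu : 0 < 1/p₁ - 1 := by linarith
        have hv : 0 < 1/p₂ - 1 := by linarith
        have hl : 0 < σ₁ / ((1/p₁) * (1/p₁ - 1)) := by positivity
        apply main_alg p₁ p₂ p σ₁ σ₂ (σ₁ / ((1/p₁) * (1/p₁ - 1))) (1/p₁ - 1) (1/p₂ - 1)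
          hp₁ hp₂ hp h1 h3 hl hu hv h2 hscal'
        · rw [abs_of_neg (by linarith)]; ring
        · rw [abs_of_neg (by linarith)]; ring
        · rw [hscal']
          rw [abs_of_neg (by linarith)]
          ring
        · have hx : (1/p₁)*(1/p₁ - 1) ≠ 0 := ne_of_gt (mul_pos hα hu)
          rw [div_mul_eq_mul_div, div_mul_eq_mul_div, eq_div_iff hx]
          ring
        · have hx : (1/p₁)*(1/p₁ - 1) ≠ 0 := ne_of_gt (mul_pos hα hu)
          rw [div_mul_eq_mul_div, div_mul_eq_mul_div, eq_div_iff hx]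
          linear_combination -hBL
  rw [show (-(d:ℝ)/2 * (1/p₁)) = (-(1/p₁))*((d:ℝ)/2) by ring,
      show (-(d:ℝ)/2 * (1/p₂)) = (-(1/p₂))*((d:ℝ)/2) by ring,
      show (-(d:ℝ)/(2*p)) = (-(1/p))*((d:ℝ)/2) by
        rw [neg_div, neg_mul, neg_inj, one_div, inv_mul_eq_div, div_div],
      show (-(d:ℝ)/2) = (-1:ℝ)*((d:ℝ)/2) by ring,
      Real.rpow_mul hσ₁.le, Real.rpow_mul hσ₂.le, Real.rpow_mul (by positivity : (0:ℝ) ≤ (1/p₁)/σ₁ * ((1/p₂)/σ₂) / ((1/p₁)/σ₁ + (1/p₂)/σ₂) * p),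
      Real.rpow_mul hcs.le, Real.rpow_neg_one]
  rw [← Real.mul_rpow (by positivity) (by positivity),
      ← Real.mul_rpow (by positivity) (by positivity),
      ← Real.mul_rpow (by positivity) (by positivity)]
  rw [key]
  have hCpos : 0 < Cc p₁ * Cc p₂ / Cc p :=
    div_pos (mul_pos (Cc_pos hp₁) (Cc_pos hp₂)) (Cc_pos hp)
  rw [← Real.rpow_natCast (Cc p₁ * Cc p₂ / Cc p) 2, ← Real.rpow_mul hCpos.le,
      ← Real.rpow_natCast (Cc p₁ * Cc p₂ / Cc p) d]
  congr 1
  push_cast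
  ring


end
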